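/- Every rewriting sequence based on the reading and merging rules of the suspension calculus terminates, i.e., the rewrite relation generated by rules (r1)-(r6) and (m1)-(m6) applied at arbitrary subexpressions is strongly normalizing on well-formed suspension expressions. -/

import Mathlib

/- Terms of the suspension calculus: constants, de Bruijn indices `#i`,
applications, abstractions, and suspensions `[t, ol, nl, e]`. -/
mutual
inductive Tm : Type where
  | const : Nat → Tm
  | idx : Nat → Tm
  | app : Tm → Tm → Tm
  | lam : Tm → Tm
  | susp : Tm → Nat → Nat → Env → Tm
/-- Environments: `nil`, cons cells `(t,n)::e`, and merges `{e1, nl1, ol2, e2}`. -/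
inductive Env : Type where
  | nil : Env
  | econs : Tm → Nat → Env → Env
  | merge : Env → Nat → Nat → Env → Env
end

/-- Length of an environment. -/
def Env.len : Env → Nat
  | .nil => 0
  | .econs _ _ e => 1 + Env.len e
  | .merge e1 nl1 _ e2 => Env.len e1 + (Env.len e2 - nl1)

/-- Level of an environment. -/
def Env.lev : Env → Nat
  | .nil => 0
  | .econs _ l _ => l
  | .merge _ nl1 ol2 e2 => Env.lev e2 + (nl1 - ol2)

/- Well-formedness of suspension expressions. -/
mutual
inductive WfTm : Tm → Prop where
  | const : ∀ c, WfTm (.const c)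
  | idx : ∀ i, 1 ≤ i → WfTm (.idx i)
  | app : ∀ {t1 t2}, WfTm t1 → WfTm t2 → WfTm (.app t1 t2)
  | lam : ∀ {t}, WfTm t → WfTm (.lam t)
  | susp : ∀ {t e} (ol nl : Nat), WfTm t → WfEnv e → Env.len e = ol →
      Env.lev e ≤ nl → WfTm (.susp t ol nl e)
inductive WfEnv : Env → Prop where
  | nil : WfEnv .nil
  | econs : ∀ {t e} (l : Nat), WfTm t → WfEnv e → Env.lev e ≤ l → WfEnv (.econs t l e)
  | merge : ∀ {e1 e2} (nl1 ol2 : Nat), WfEnv e1 → WfEnv e2 → Env.lev e1 ≤ nl1 →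
      Env.len e2 = ol2 → WfEnv (.merge e1 nl1 ol2 e2)
end

/- One-step rewriting by the reading rules (r1)-(r6) and merging rules
(m1)-(m6), applied at any subexpression. -/
mutual
inductive SR : Tm → Tm → Prop where
  | r1 : ∀ c ol nl e, SR (.susp (.const c) ol nl e) (.const c)
  | r2 : ∀ i nl, 1 ≤ i → SR (.susp (.idx i) 0 nl .nil) (.idx (i + nl))
  | r3 : ∀ ol nl t l e, SR (.susp (.idx 1) ol nl (.econs t l e)) (.susp t 0 (nl - l) .nil)
  | r4 : ∀ i ol nl t l e, 1 < i →
      SR (.susp (.idx i) ol nl (.econs t l e)) (.susp (.idx (i - 1)) (ol - 1) nl e)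
  | r5 : ∀ t1 t2 ol nl e,
      SR (.susp (.app t1 t2) ol nl e) (.app (.susp t1 ol nl e) (.susp t2 ol nl e))
  | r6 : ∀ t ol nl e,
      SR (.susp (.lam t) ol nl e)
         (.lam (.susp t (ol + 1) (nl + 1) (.econs (.idx 1) (nl + 1) e)))
  | m1 : ∀ t ol1 nl1 e1 ol2 nl2 e2,
      SR (.susp (.susp t ol1 nl1 e1) ol2 nl2 e2)
         (.susp t (ol1 + (ol2 - nl1)) (nl2 + (nl1 - ol2)) (.merge e1 nl1 ol2 e2))
  | appL : ∀ {t1 t1'} (t2 : Tm), SR t1 t1' → SR (.app t1 t2) (.app t1' t2)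
  | appR : ∀ (t1 : Tm) {t2 t2'}, SR t2 t2' → SR (.app t1 t2) (.app t1 t2')
  | lamC : ∀ {t t'}, SR t t' → SR (.lam t) (.lam t')
  | suspT : ∀ {t t'} ol nl e, SR t t' → SR (.susp t ol nl e) (.susp t' ol nl e)
  | suspE : ∀ t ol nl {e e'}, SRE e e' → SR (.susp t ol nl e) (.susp t ol nl e')
inductive SRE : Env → Env → Prop where
  | m2 : ∀ e1 nl1, SRE (.merge e1 nl1 0 .nil) e1
  | m3 : ∀ ol2 e2, SRE (.merge .nil 0 ol2 e2) e2
  | m4 : ∀ nl1 ol2 t l e2, 1 ≤ nl1 →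
      SRE (.merge .nil nl1 ol2 (.econs t l e2)) (.merge .nil (nl1 - 1) (ol2 - 1) e2)
  | m5 : ∀ t n e1 nl1 ol2 s l e2, n < nl1 →
      SRE (.merge (.econs t n e1) nl1 ol2 (.econs s l e2))
          (.merge (.econs t n e1) (nl1 - 1) (ol2 - 1) e2)
  | m6 : ∀ t n e1 ol2 s l e2,
      SRE (.merge (.econs t n e1) n ol2 (.econs s l e2))
          (.econs (.susp t ol2 l (.econs s l e2)) (l + (n - ol2))
                  (.merge e1 n ol2 (.econs s l e2)))
  | consT : ∀ {t t'} l e, SR t t' → SRE (.econs t l e) (.econs t' l e)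
  | consE : ∀ t l {e e'}, SRE e e' → SRE (.econs t l e) (.econs t l e')
  | mergeL : ∀ {e1 e1'} nl1 ol2 e2, SRE e1 e1' →
      SRE (.merge e1 nl1 ol2 e2) (.merge e1' nl1 ol2 e2)
  | mergeR : ∀ e1 nl1 ol2 {e2 e2'}, SRE e2 e2' →
      SRE (.merge e1 nl1 ol2 e2) (.merge e1 nl1 ol2 e2')
end

/-! ### Development: strong normalization -/

section SNdev

mutual
/-- Quasi-model weight of a term. -/
def muT : Tm → Nat
  | .const _ => 1
  | .idx _ => 1
  | .app s t => muT s + muT t + 1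
  | .lam t => muT t + 1
  | .susp t _ _ e => muT t * nuE e
/-- Quasi-model weight of an environment. -/
def nuE : Env → Nat
  | .nil => 2
  | .econs t _ e => max (2 * muT t) (nuE e)
  | .merge e1 _ _ e2 => nuE e1 * nuE e2
end

mutual
theorem muT_pos : (t : Tm) → 1 ≤ muT t
  | .const _ => le_refl 1
  | .idx _ => le_refl 1
  | .app s t => by simp [muT]
  | .lam t => by simp [muT]
  | .susp t _ _ e => by
      have h1 := muT_pos t
      have h2 := nuE_ge e
      simp only [muT]
      nlinarith
theorem nuE_ge : (e : Env) → 2 ≤ nuE e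
  | .nil => le_refl 2
  | .econs t _ e => by
      have h2 := nuE_ge e
      simp only [nuE]
      omega
  | .merge e1 _ _ e2 => by
      have h1 := nuE_ge e1
      have h2 := nuE_ge e2
      simp only [nuE]
      nlinarith
end

theorem nuE_pos (e : Env) : 0 < nuE e := lt_of_lt_of_le (by norm_num) (nuE_ge e)

mutual
/-- The model weakly decreases along rewriting (terms). -/
theorem muQ : ∀ {t u : Tm}, SR t u → muT u ≤ muT t
  | _, _, .r1 c ol nl e => by
      have h2 := nuE_ge e
      simp only [muT]; nlinarith
  | _, _, .r2 i nl _ => by simp [muT, nuE]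
  | _, _, .r3 ol nl t l e => by
      simp only [muT, nuE]
      have := le_max_left (2 * muT t) (nuE e)
      omega
  | _, _, .r4 i ol nl t l e _ => by
      simp only [muT, nuE]
      have := le_max_right (2 * muT t) (nuE e)
      omega
  | _, _, .r5 t1 t2 ol nl e => by
      have h2 := nuE_ge e
      simp only [muT]; nlinarith
  | _, _, .r6 t ol nl e => by
      have h2 := nuE_ge e
      have h1 := muT_pos t
      simp only [muT, nuE]
      rw [show 2 * 1 = 2 from rfl, max_eq_right h2]
      nlinarith
  | _, _, .m1 t ol1 nl1 e1 ol2 nl2 e2 => by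
      simp only [muT, nuE]
      rw [Nat.mul_assoc]
  | _, _, .appL t2 h => by
      have := muQ h
      simp only [muT]; omega
  | _, _, .appR t1 h => by
      have := muQ h
      simp only [muT]; omega
  | _, _, .lamC h => by
      have := muQ h
      simp only [muT]; omega
  | _, _, .suspT ol nl e h => by
      have := muQ h
      simp only [muT]
      exact Nat.mul_le_mul_right _ this
  | _, _, .suspE t ol nl h => by
      have := nuQ h
      simp only [muT]
      exact Nat.mul_le_mul_left _ this
theorem nuQ : ∀ {e f : Env}, SRE e f → nuE f ≤ nuE e
  | _, _, .m2 e1 nl1 => by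
      have h1 := nuE_ge e1
      simp only [nuE]; nlinarith
  | _, _, .m3 ol2 e2 => by
      have h2 := nuE_ge e2
      simp only [nuE]; nlinarith
  | _, _, .m4 nl1 ol2 t l e2 _ => by
      simp only [nuE]
      have := le_max_right (2 * muT t) (nuE e2)
      nlinarith
  | _, _, .m5 t n e1 nl1 ol2 s l e2 _ => by
      simp only [nuE]
      have := le_max_right (2 * muT s) (nuE e2)
      exact Nat.mul_le_mul_left _ this
  | _, _, .m6 t n e1 ol2 s l e2 => by
      simp only [nuE, muT]
      apply max_le
      · rw [← Nat.mul_assoc]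
        exact Nat.mul_le_mul_right _ (le_max_left _ _)
      · exact Nat.mul_le_mul_right _ (le_max_right _ _)
  | _, _, .consT l e h => by
      have := muQ h
      simp only [nuE]
      exact max_le_max (by omega) le_rfl
  | _, _, .consE t l h => by
      have := nuQ h
      simp only [nuE]
      exact max_le_max le_rfl this
  | _, _, .mergeL nl1 ol2 e2 h => by
      have := nuQ h
      simp only [nuE]
      exact Nat.mul_le_mul_right _ this
  | _, _, .mergeR e1 nl1 ol2 h => by
      have := nuQ h
      simp only [nuE]
      exact Nat.mul_le_mul_left _ this
end

/-- One-step rewriting on the disjoint sum of terms and environments. -/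
inductive StepW : (Tm ⊕ Env) → (Tm ⊕ Env) → Prop where
  | t : ∀ {a b : Tm}, SR a b → StepW (.inl a) (.inl b)
  | e : ∀ {a b : Env}, SRE a b → StepW (.inr a) (.inr b)

/-- Immediate sub-component relation. -/
inductive SubW : (Tm ⊕ Env) → (Tm ⊕ Env) → Prop where
  | appL : ∀ {t1 t2}, SubW (.inl t1) (.inl (.app t1 t2))
  | appR : ∀ {t1 t2}, SubW (.inl t2) (.inl (.app t1 t2))
  | lam : ∀ {t}, SubW (.inl t) (.inl (.lam t))
  | suspT : ∀ {t ol nl e}, SubW (.inl t) (.inl (.susp t ol nl e))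
  | suspE : ∀ {t ol nl e}, SubW (.inr e) (.inl (.susp t ol nl e))
  | econsT : ∀ {t l e}, SubW (.inl t) (.inr (.econs t l e))
  | econsE : ∀ {t l e}, SubW (.inr e) (.inr (.econs t l e))
  | mergeL : ∀ {e1 n o e2}, SubW (.inr e1) (.inr (.merge e1 n o e2))
  | mergeR : ∀ {e1 n o e2}, SubW (.inr e2) (.inr (.merge e1 n o e2))

/-- `RelW x y`: `x` is a predecessor of `y` (a one-step reduct or a component). -/
def RelW (x y : Tm ⊕ Env) : Prop := StepW y x ∨ SubW x y

mutual
def szT : Tm → Nat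
  | .const _ => 1
  | .idx _ => 1
  | .app a b => szT a + szT b + 1
  | .lam t => szT t + 1
  | .susp t _ _ e => szT t + szE e + 1
def szE : Env → Nat
  | .nil => 1
  | .econs t _ e => szT t + szE e + 1
  | .merge a _ _ b => szE a + szE b + 1
end

def szW : Tm ⊕ Env → Nat
  | .inl t => szT t
  | .inr e => szE e

theorem szT_pos : ∀ t, 1 ≤ szT t := by
  intro t; cases t <;> simp [szT]

theorem szE_pos : ∀ e, 1 ≤ szE e := by
  intro e; cases e <;> simp [szE]

theorem szW_pos : ∀ x, 1 ≤ szW x := by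
  intro x; cases x with
  | inl t => exact szT_pos t
  | inr e => exact szE_pos e

theorem sub_sz : ∀ {x y}, SubW x y → szW x < szW y := by
  intro x y h
  cases h <;> simp [szW, szT, szE] <;> omega

/-- Lift a step of a component to a step of the enclosing expression. -/
theorem sub_lift : ∀ {z y z'}, SubW z y → StepW z z' → ∃ y', StepW y y' ∧ SubW z' y' := by
  intro z y z' hs hstep
  cases hs with
  | appL => cases hstep with | t h => exact ⟨_, .t (.appL _ h), .appL⟩
  | appR => cases hstep with | t h => exact ⟨_, .t (.appR _ h), .appR⟩
  | lam => cases hstep with | t h => exact ⟨_, .t (.lamC h), .lam⟩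
  | suspT => cases hstep with | t h => exact ⟨_, .t (.suspT _ _ _ h), .suspT⟩
  | suspE => cases hstep with | e h => exact ⟨_, .t (.suspE _ _ _ h), .suspE⟩
  | econsT => cases hstep with | t h => exact ⟨_, .e (.consT _ _ h), .econsT⟩
  | econsE => cases hstep with | e h => exact ⟨_, .e (.consE _ _ h), .econsE⟩
  | mergeL => cases hstep with | e h => exact ⟨_, .e (.mergeL _ _ _ h), .mergeL⟩
  | mergeR => cases hstep with | e h => exact ⟨_, .e (.mergeR _ _ _ h), .mergeR⟩

theorem substar_lift : ∀ {z y}, Relation.ReflTransGen SubW z y →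
    ∀ {z'}, StepW z z' → ∃ y', StepW y y' ∧ Relation.ReflTransGen SubW z' y' := by
  intro z y h
  induction h using Relation.ReflTransGen.head_induction_on with
  | refl => intro z' hz; exact ⟨z', hz, .refl⟩
  | head hsub _hrest ih =>
    intro z' hz
    obtain ⟨w', hw', hsw⟩ := sub_lift hsub hz
    obtain ⟨y', hy', hwy⟩ := ih hw'
    exact ⟨y', hy', .head hsw hwy⟩

theorem accStep_inl : ∀ {t}, Acc (fun a b => SR b a) t →
    Acc (fun a b => StepW b a) (Sum.inl t) := by
  intro t h
  induction h with
  | intro t _ ih =>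
    constructor
    intro w hw
    cases hw with
    | t hst => exact ih _ hst

theorem accStep_inr : ∀ {e}, Acc (fun a b => SRE b a) e →
    Acc (fun a b => StepW b a) (Sum.inr e) := by
  intro e h
  induction h with
  | intro e _ ih =>
    constructor
    intro w hw
    cases hw with
    | e hst => exact ih _ hst

theorem acc_relW_aux : ∀ y, Acc (fun a b => StepW b a) y →
    ∀ z, Relation.ReflTransGen SubW z y → Acc RelW z := by
  intro y hy
  induction hy with
  | intro y _h ih =>
    have H : ∀ n z, szW z ≤ n → Relation.ReflTransGen SubW z y → Acc RelW z := by
      intro n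
      induction n with
      | zero => intro z h0 _; exact absurd (szW_pos z) (by omega)
      | succ n ihn =>
        intro z hsz hzy
        constructor
        rintro w (hstep | hsub)
        · obtain ⟨y', hyy', hw⟩ := substar_lift hzy hstep
          exact ih _ hyy' _ hw
        · have hw : Relation.ReflTransGen SubW w y := Relation.ReflTransGen.head hsub hzy
          have hlt : szW w < szW z := sub_sz hsub
          exact ihn w (by omega) hw
    exact fun z hz => H (szW z) z le_rfl hz

theorem accW_of_accT {t : Tm} (h : Acc (fun a b => SR b a) t) : Acc RelW (Sum.inl t) :=
  acc_relW_aux _ (accStep_inl h) _ .refl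

theorem accW_of_accE {e : Env} (h : Acc (fun a b => SRE b a) e) : Acc RelW (Sum.inr e) :=
  acc_relW_aux _ (accStep_inr h) _ .refl

theorem accT_of_accW : ∀ {x}, Acc RelW x → ∀ {t : Tm}, x = Sum.inl t →
    Acc (fun a b => SR b a) t := by
  intro x hx
  induction hx with
  | intro x _ ih =>
    rintro t rfl
    constructor
    intro u hu
    exact ih (Sum.inl u) (Or.inl (.t hu)) rfl

theorem accE_of_accW : ∀ {x}, Acc RelW x → ∀ {e : Env}, x = Sum.inr e →
    Acc (fun a b => SRE b a) e := by
  intro x hx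
  induction hx with
  | intro x _ ih =>
    rintro e rfl
    constructor
    intro u hu
    exact ih (Sum.inr u) (Or.inl (.e hu)) rfl

/-- Total ordinal rank for the combined relation. -/
noncomputable def rnk (x : Tm ⊕ Env) : Ordinal :=
  @dite _ (Acc RelW x) (Classical.dec _) (fun h => h.rank) (fun _ => 0)

theorem rnk_of_acc {x : Tm ⊕ Env} (h : Acc RelW x) : rnk x = h.rank := dif_pos h

theorem rnk_lt {x y : Tm ⊕ Env} (hy : Acc RelW y) (h : RelW x y) : rnk x < rnk y := by
  have hx : Acc RelW x := hy.inv h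
  rw [rnk_of_acc hx, rnk_of_acc hy]
  exact Acc.rank_lt_of_rel hy h

theorem acc_rel_idx (i : Nat) : Acc RelW (Sum.inl (Tm.idx i)) := by
  constructor
  rintro y (h | h)
  · cases h with | t hs => cases hs
  · cases h

theorem rnk_idx (i : Nat) : rnk (Sum.inl (Tm.idx i)) = 0 := by
  have h := acc_rel_idx i
  rw [rnk_of_acc h]
  have : IsEmpty {b // RelW b (Sum.inl (Tm.idx i))} := by
    constructor
    rintro ⟨b, (hb | hb)⟩
    · cases hb with | t hs => cases hs
    · cases hb
  rw [Acc.rank_eq]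
  exact ciSup_of_empty _

/-! Accessibility of normal constructors. -/

theorem acc_const (c : Nat) : Acc (fun a b => SR b a) (Tm.const c) := by
  constructor; intro u hu; cases hu

theorem acc_idx (i : Nat) : Acc (fun a b => SR b a) (Tm.idx i) := by
  constructor; intro u hu; cases hu

theorem acc_nil : Acc (fun a b => SRE b a) Env.nil := by
  constructor; intro u hu; cases hu

theorem acc_app : ∀ {t1}, Acc (fun a b => SR b a) t1 → ∀ {t2}, Acc (fun a b => SR b a) t2 →
    Acc (fun a b => SR b a) (Tm.app t1 t2) := by
  intro t1 h1
  induction h1 with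
  | intro t1 h1' ih1 =>
    intro t2 h2
    induction h2 with
    | intro t2 h2' ih2 =>
      constructor
      intro u hu
      cases hu with
      | appL _ hs => exact ih1 _ hs (Acc.intro _ h2')
      | appR _ hs => exact ih2 _ hs

theorem acc_lam : ∀ {t}, Acc (fun a b => SR b a) t → Acc (fun a b => SR b a) (Tm.lam t) := by
  intro t h
  induction h with
  | intro t _ ih =>
    constructor
    intro u hu
    cases hu with
    | lamC hs => exact ih _ hs

theorem acc_econs : ∀ {t}, Acc (fun a b => SR b a) t → ∀ {l e}, Acc (fun a b => SRE b a) e →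
    Acc (fun a b => SRE b a) (Env.econs t l e) := by
  intro t h1
  induction h1 with
  | intro t h1' ih1 =>
    intro l e h2
    induction h2 with
    | intro e h2' ih2 =>
      constructor
      intro u hu
      cases hu with
      | consT _ _ hs => exact ih1 _ hs (Acc.intro _ h2')
      | consE _ _ hs => exact ih2 _ hs

/-- "nil-tower" environments: merges whose right spine ends in `nil`. -/
def NTb : Env → Bool
  | .nil => true
  | .econs _ _ _ => false
  | .merge _ _ _ e2 => NTb e2

/-- Second component of the termination measure. -/
def betaA (e : Env) : Nat := if NTb e then 0 else 1

theorem betaA_le_one (e : Env) : betaA e ≤ 1 := by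
  unfold betaA; split <;> omega

theorem betaA_nil : betaA Env.nil = 0 := rfl

theorem betaA_econs (t l e) : betaA (Env.econs t l e) = 1 := rfl

theorem betaA_merge (e1 n o e2) : betaA (Env.merge e1 n o e2) = betaA e2 := by
  have hN : NTb (Env.merge e1 n o e2) = NTb e2 := by simp [NTb]
  unfold betaA; rw [hN]

/-- Stepping out of the nil-tower class strictly decreases the model value. -/
theorem nt_strict : ∀ {f f' : Env}, SRE f f' → NTb f = true → NTb f' = false → nuE f' < nuE f
  | _, _, .m2 e1 nl1, _, h2 => by
      have h := nuE_ge e1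
      simp only [nuE]; omega
  | _, _, .m3 ol2 e2, h1, h2 => by
      simp only [NTb] at h1; rw [h1] at h2; cases h2
  | _, _, .m4 nl1 ol2 t l e2 _, h1, _ => by
      simp only [NTb] at h1; cases h1
  | _, _, .m5 t n e1 nl1 ol2 s l e2 _, h1, _ => by
      simp only [NTb] at h1; cases h1
  | _, _, .m6 t n e1 ol2 s l e2, h1, _ => by
      simp only [NTb] at h1; cases h1
  | _, _, .consT l e _, h1, _ => by
      simp only [NTb] at h1; cases h1
  | _, _, .consE t l _, h1, _ => by
      simp only [NTb] at h1; cases h1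
  | _, _, .mergeL nl1 ol2 e2 _, h1, h2 => by
      simp only [NTb] at h1 h2; rw [h1] at h2; cases h2
  | _, _, .mergeR e1 nl1 ol2 h, h1, h2 => by
      simp only [NTb] at h1 h2
      have hlt := nt_strict h h1 h2
      have := nuE_pos e1
      simp only [nuE]
      exact Nat.mul_lt_mul_of_le_of_lt le_rfl hlt this

/-- The lexicographic termination measure. -/
abbrev MT := Nat × (Nat × (Ordinal × Ordinal))

def MLT : MT → MT → Prop :=
  Prod.Lex (· < ·) (Prod.Lex (· < ·) (Prod.Lex (· < ·) (· < ·)))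

theorem mlt_wf : WellFounded MLT :=
  WellFounded.prod_lex wellFounded_lt
    (WellFounded.prod_lex wellFounded_lt (WellFounded.prod_lex wellFounded_lt wellFounded_lt))

theorem MLT.of1 {w1 w2 b1 b2 : Nat} {d1 d2 x1 x2 : Ordinal} (hw : w1 < w2) :
    MLT (w1, b1, d1, x1) (w2, b2, d2, x2) := Prod.Lex.left _ _ hw

theorem MLT.of2 {w1 w2 b1 b2 : Nat} {d1 d2 x1 x2 : Ordinal} (hw : w1 ≤ w2) (hb : b1 < b2) :
    MLT (w1, b1, d1, x1) (w2, b2, d2, x2) := by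
  rcases lt_or_eq_of_le hw with h | h
  · exact Prod.Lex.left _ _ h
  · subst h; exact Prod.Lex.right _ (Prod.Lex.left _ _ hb)

theorem MLT.of3 {w1 w2 b1 b2 : Nat} {d1 d2 x1 x2 : Ordinal} (hw : w1 ≤ w2) (hb : b1 ≤ b2)
    (hd : d1 < d2) : MLT (w1, b1, d1, x1) (w2, b2, d2, x2) := by
  rcases lt_or_eq_of_le hw with h | h
  · exact Prod.Lex.left _ _ h
  · subst h
    rcases lt_or_eq_of_le hb with h | h
    · exact Prod.Lex.right _ (Prod.Lex.left _ _ h)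
    · subst h; exact Prod.Lex.right _ (Prod.Lex.right _ (Prod.Lex.left _ _ hd))

theorem MLT.of4 {w1 w2 b1 b2 : Nat} {d1 d2 x1 x2 : Ordinal} (hw : w1 ≤ w2) (hb : b1 ≤ b2)
    (hd : d1 = d2) (hx : x1 < x2) : MLT (w1, b1, d1, x1) (w2, b2, d2, x2) := by
  rcases lt_or_eq_of_le hw with h | h
  · exact Prod.Lex.left _ _ h
  · subst h
    rcases lt_or_eq_of_le hb with h | h
    · exact Prod.Lex.right _ (Prod.Lex.left _ _ h)
    · subst h; subst hd
      exact Prod.Lex.right _ (Prod.Lex.right _ (Prod.Lex.right _ hx))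

/-- The statement for suspensions, indexed by the measure. -/
def StmtA (m : MT) : Prop :=
  ∀ b ol nl f, Acc (fun a b => SR b a) b → Acc (fun a b => SRE b a) f →
    (muT b * nuE f, betaA f, rnk (.inl b), rnk (.inr f)) = m →
    Acc (fun a b => SR b a) (Tm.susp b ol nl f)

/-- The statement for merges, indexed by the measure. -/
def StmtB (m : MT) : Prop :=
  ∀ e1 nl1 ol2 e2, Acc (fun a b => SRE b a) e1 → Acc (fun a b => SRE b a) e2 →
    (nuE e1 * nuE e2, 0, rnk (.inr e1), rnk (.inr e2)) = m →
    Acc (fun a b => SRE b a) (Env.merge e1 nl1 ol2 e2)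

set_option maxHeartbeats 2000000 in
theorem main_ind : ∀ m : MT, StmtA m ∧ StmtB m := by
  intro m
  induction m using mlt_wf.induction with
  | _ m IH =>
  constructor
  · -- suspensions
    intro b ol nl f hb hf hm
    subst hm
    have hbW : Acc RelW (.inl b) := accW_of_accT hb
    have hfW : Acc RelW (.inr f) := accW_of_accE hf
    have IHA : ∀ b' ol' nl' f', Acc (fun a b => SR b a) b' → Acc (fun a b => SRE b a) f' →
        MLT (muT b' * nuE f', betaA f', rnk (.inl b'), rnk (.inr f'))
            (muT b * nuE f, betaA f, rnk (.inl b), rnk (.inr f)) →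
        Acc (fun a b => SR b a) (Tm.susp b' ol' nl' f') :=
      fun b' ol' nl' f' h1 h2 hlt => (IH _ hlt).1 b' ol' nl' f' h1 h2 rfl
    have IHB : ∀ e1 nl1 ol2 e2, Acc (fun a b => SRE b a) e1 → Acc (fun a b => SRE b a) e2 →
        MLT (nuE e1 * nuE e2, 0, rnk (.inr e1), rnk (.inr e2))
            (muT b * nuE f, betaA f, rnk (.inl b), rnk (.inr f)) →
        Acc (fun a b => SRE b a) (Env.merge e1 nl1 ol2 e2) :=
      fun e1 nl1 ol2 e2 h1 h2 hlt => (IH _ hlt).2 e1 nl1 ol2 e2 h1 h2 rfl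
    constructor
    intro x hx
    cases hx with
    | r1 c ol nl e => exact acc_const c
    | r2 i nl h => exact acc_idx _
    | r3 ol nl t l e =>
      have ht : Acc (fun a b => SR b a) t := accT_of_accW (hfW.inv (Or.inr SubW.econsT)) rfl
      have hW : muT t * nuE Env.nil ≤ muT (Tm.idx 1) * nuE (Env.econs t l e) := by
        simp only [muT, nuE]
        have := le_max_left (2 * muT t) (nuE e)
        omega
      have hB : betaA Env.nil < betaA (Env.econs t l e) := by
        rw [betaA_nil, betaA_econs]; omega
      exact IHA t 0 (nl - l) Env.nil ht acc_nil (MLT.of2 hW hB)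
    | r4 i ol nl t l e hgt =>
      have he : Acc (fun a b => SRE b a) e := accE_of_accW (hfW.inv (Or.inr SubW.econsE)) rfl
      have hW : muT (Tm.idx (i - 1)) * nuE e ≤ muT (Tm.idx i) * nuE (Env.econs t l e) := by
        simp only [muT, nuE]
        have := le_max_right (2 * muT t) (nuE e)
        omega
      have hB : betaA e ≤ betaA (Env.econs t l e) := by
        rw [betaA_econs]; exact betaA_le_one e
      have hD : rnk (Sum.inl (Tm.idx (i - 1))) = rnk (Sum.inl (Tm.idx i)) := by
        rw [rnk_idx, rnk_idx]
      have hE : rnk (Sum.inr e) < rnk (Sum.inr (Env.econs t l e)) :=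
        rnk_lt hfW (Or.inr SubW.econsE)
      exact IHA (Tm.idx (i - 1)) (ol - 1) nl e (acc_idx _) he (MLT.of4 hW hB hD hE)
    | r5 t1 t2 olx nlx ex =>
      have ht1 : Acc (fun a b => SR b a) t1 := accT_of_accW (hbW.inv (Or.inr SubW.appL)) rfl
      have ht2 : Acc (fun a b => SR b a) t2 := accT_of_accW (hbW.inv (Or.inr SubW.appR)) rfl
      have hp := nuE_pos f
      have hW1 : muT t1 * nuE f < muT (Tm.app t1 t2) * nuE f := by
        have := muT_pos t2
        simp only [muT]
        exact mul_lt_mul_of_pos_right (by omega) hp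
      have hW2 : muT t2 * nuE f < muT (Tm.app t1 t2) * nuE f := by
        have := muT_pos t1
        simp only [muT]
        exact mul_lt_mul_of_pos_right (by omega) hp
      exact acc_app (IHA t1 ol nl f ht1 hf (MLT.of1 hW1))
        (IHA t2 ol nl f ht2 hf (MLT.of1 hW2))
    | r6 t olx nlx ex =>
      have ht : Acc (fun a b => SR b a) t := accT_of_accW (hbW.inv (Or.inr SubW.lam)) rfl
      have hfe : Acc (fun a b => SRE b a) (Env.econs (Tm.idx 1) (nl + 1) f) :=
        acc_econs (acc_idx 1) hf
      have hW : muT t * nuE (Env.econs (Tm.idx 1) (nl + 1) f) < muT (Tm.lam t) * nuE f := by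
        have h2 := nuE_ge f
        simp only [muT, nuE]
        rw [show 2 * 1 = 2 from rfl, max_eq_right h2]
        exact mul_lt_mul_of_pos_right (by omega) (nuE_pos f)
      exact acc_lam (IHA t (ol + 1) (nl + 1) _ ht hfe (MLT.of1 hW))
    | m1 t ol1 nl1 e1 ol2x nl2x e2x =>
      -- here the node is susp (susp t ol1 nl1 e1) ol2 nl2 e2  (outer names ol nl f got unified)
      have ht : Acc (fun a b => SR b a) t := accT_of_accW (hbW.inv (Or.inr SubW.suspT)) rfl
      have he1 : Acc (fun a b => SRE b a) e1 := accE_of_accW (hbW.inv (Or.inr SubW.suspE)) rfl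
      have hWle : nuE e1 * nuE f ≤ muT (Tm.susp t ol1 nl1 e1) * nuE f := by
        simp only [muT]
        have := muT_pos t
        exact mul_le_mul_left (by nlinarith [nuE_pos e1]) _
      have hD1 : rnk (Sum.inr e1) < rnk (Sum.inl (Tm.susp t ol1 nl1 e1)) :=
        rnk_lt hbW (Or.inr SubW.suspE)
      have hmerge : Acc (fun a b => SRE b a) (Env.merge e1 nl1 ol f) :=
        IHB e1 nl1 ol f he1 hf (MLT.of3 hWle (Nat.zero_le _) hD1)
      have hWeq : muT t * nuE (Env.merge e1 nl1 ol f)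
          = muT (Tm.susp t ol1 nl1 e1) * nuE f := by
        simp only [muT, nuE]; rw [Nat.mul_assoc]
      have hBeq : betaA (Env.merge e1 nl1 ol f) = betaA f := betaA_merge _ _ _ _
      have hD2 : rnk (Sum.inl t) < rnk (Sum.inl (Tm.susp t ol1 nl1 e1)) :=
        rnk_lt hbW (Or.inr SubW.suspT)
      exact IHA t _ _ (Env.merge e1 nl1 ol f) ht hmerge
        (MLT.of3 (le_of_eq hWeq) (le_of_eq hBeq) hD2)
    | suspT olx nlx ex h =>
      rename_i t'
      have ht' : Acc (fun a b => SR b a) t' := hb.inv h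
      have hW : muT t' * nuE f ≤ muT b * nuE f := mul_le_mul_left (muQ h) _
      have hD : rnk (Sum.inl t') < rnk (Sum.inl b) := rnk_lt hbW (Or.inl (StepW.t h))
      exact IHA t' ol nl f ht' hf (MLT.of3 hW le_rfl hD)
    | suspE tx olx nlx h =>
      rename_i f'
      have hf' : Acc (fun a b => SRE b a) f' := hf.inv h
      have hWle : muT b * nuE f' ≤ muT b * nuE f := mul_le_mul_right (nuQ h) _
      rcases lt_or_eq_of_le hWle with hlt | heq
      · exact IHA b ol nl f' hb hf' (MLT.of1 hlt)
      · have hmb : 0 < muT b := muT_pos b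
        have hnueq : nuE f' = nuE f := Nat.eq_of_mul_eq_mul_left hmb heq
        have hble : betaA f' ≤ betaA f := by
          by_cases hnt : NTb f = true
          · have hnt' : NTb f' = true := by
              by_contra hc
              have := nt_strict h hnt (by simpa using hc)
              omega
            simp [betaA, hnt, hnt']
          · simp only [betaA, if_neg hnt]
            exact betaA_le_one f'
        have hE : rnk (Sum.inr f') < rnk (Sum.inr f) := rnk_lt hfW (Or.inl (StepW.e h))
        exact IHA b ol nl f' hb hf' (MLT.of4 hWle hble rfl hE)
  · -- merges
    intro e1 nl1 ol2 e2 h1 h2 hm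
    subst hm
    have h1W : Acc RelW (.inr e1) := accW_of_accE h1
    have h2W : Acc RelW (.inr e2) := accW_of_accE h2
    have IHA : ∀ b' ol' nl' f', Acc (fun a b => SR b a) b' → Acc (fun a b => SRE b a) f' →
        MLT (muT b' * nuE f', betaA f', rnk (.inl b'), rnk (.inr f'))
            (nuE e1 * nuE e2, 0, rnk (.inr e1), rnk (.inr e2)) →
        Acc (fun a b => SR b a) (Tm.susp b' ol' nl' f') :=
      fun b' ol' nl' f' ha hb hlt => (IH _ hlt).1 b' ol' nl' f' ha hb rfl
    have IHB : ∀ f1 nl1' ol2' f2, Acc (fun a b => SRE b a) f1 → Acc (fun a b => SRE b a) f2 →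
        MLT (nuE f1 * nuE f2, 0, rnk (.inr f1), rnk (.inr f2))
            (nuE e1 * nuE e2, 0, rnk (.inr e1), rnk (.inr e2)) →
        Acc (fun a b => SRE b a) (Env.merge f1 nl1' ol2' f2) :=
      fun f1 nl1' ol2' f2 ha hb hlt => (IH _ hlt).2 f1 nl1' ol2' f2 ha hb rfl
    constructor
    intro x hx
    cases hx with
    | m2 e1x nl1x => exact h1
    | m3 ol2x e2x => exact h2
    | m4 nlx olx t l e2' hc =>
      have he2' : Acc (fun a b => SRE b a) e2' := accE_of_accW (h2W.inv (Or.inr SubW.econsE)) rfl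
      have hW : nuE Env.nil * nuE e2' ≤ nuE Env.nil * nuE (Env.econs t l e2') :=
        mul_le_mul_right (by simp only [nuE]; exact le_max_right _ _) _
      have hE : rnk (Sum.inr e2') < rnk (Sum.inr (Env.econs t l e2')) :=
        rnk_lt h2W (Or.inr SubW.econsE)
      exact IHB Env.nil (nl1 - 1) (ol2 - 1) e2' acc_nil he2' (MLT.of4 hW le_rfl rfl hE)
    | m5 t n e1' nlx olx s l e2' hc =>
      have he2' : Acc (fun a b => SRE b a) e2' := accE_of_accW (h2W.inv (Or.inr SubW.econsE)) rfl
      have hW : nuE (Env.econs t n e1') * nuE e2'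
          ≤ nuE (Env.econs t n e1') * nuE (Env.econs s l e2') :=
        mul_le_mul_right (by simp only [nuE]; exact le_max_right _ _) _
      have hE : rnk (Sum.inr e2') < rnk (Sum.inr (Env.econs s l e2')) :=
        rnk_lt h2W (Or.inr SubW.econsE)
      exact IHB (Env.econs t n e1') (nl1 - 1) (ol2 - 1) e2' h1 he2' (MLT.of4 hW le_rfl rfl hE)
    | m6 t nx e1' olx s l e2' =>
      have ht : Acc (fun a b => SR b a) t := accT_of_accW (h1W.inv (Or.inr SubW.econsT)) rfl
      have he1' : Acc (fun a b => SRE b a) e1' := accE_of_accW (h1W.inv (Or.inr SubW.econsE)) rfl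
      have hWA : muT t * nuE (Env.econs s l e2')
          < nuE (Env.econs t nl1 e1') * nuE (Env.econs s l e2') := by
        have hmt := muT_pos t
        have hmax : muT t < nuE (Env.econs t nl1 e1') := by
          simp only [nuE]
          exact lt_of_lt_of_le (by omega) (le_max_left _ _)
        exact mul_lt_mul_of_pos_right hmax (nuE_pos _)
      have hsusp : Acc (fun a b => SR b a) (Tm.susp t ol2 l (Env.econs s l e2')) :=
        IHA t ol2 l (Env.econs s l e2') ht h2 (MLT.of1 hWA)
      have hWB : nuE e1' * nuE (Env.econs s l e2')
          ≤ nuE (Env.econs t nl1 e1') * nuE (Env.econs s l e2') :=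
        mul_le_mul_left (by simp only [nuE]; exact le_max_right _ _) _
      have hD : rnk (Sum.inr e1') < rnk (Sum.inr (Env.econs t nl1 e1')) :=
        rnk_lt h1W (Or.inr SubW.econsE)
      have hmergeB : Acc (fun a b => SRE b a) (Env.merge e1' nl1 ol2 (Env.econs s l e2')) :=
        IHB e1' nl1 ol2 (Env.econs s l e2') he1' h2 (MLT.of3 hWB le_rfl hD)
      exact acc_econs hsusp hmergeB
    | mergeL nlx olx e2x h =>
      rename_i e1'
      have he1' : Acc (fun a b => SRE b a) e1' := h1.inv h
      have hW : nuE e1' * nuE e2 ≤ nuE e1 * nuE e2 := mul_le_mul_left (nuQ h) _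
      have hD : rnk (Sum.inr e1') < rnk (Sum.inr e1) := rnk_lt h1W (Or.inl (StepW.e h))
      exact IHB e1' nl1 ol2 e2 he1' h2 (MLT.of3 hW le_rfl hD)
    | mergeR e1x nlx olx h =>
      rename_i e2'
      have he2' : Acc (fun a b => SRE b a) e2' := h2.inv h
      have hW : nuE e1 * nuE e2' ≤ nuE e1 * nuE e2 := mul_le_mul_right (nuQ h) _
      have hE : rnk (Sum.inr e2') < rnk (Sum.inr e2) := rnk_lt h2W (Or.inl (StepW.e h))
      exact IHB e1 nl1 ol2 e2' h1 he2' (MLT.of4 hW le_rfl rfl hE)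

mutual
theorem acc_all_t : ∀ t : Tm, Acc (fun a b => SR b a) t
  | .const c => acc_const c
  | .idx i => acc_idx i
  | .app a b => acc_app (acc_all_t a) (acc_all_t b)
  | .lam t => acc_lam (acc_all_t t)
  | .susp t ol nl e => (main_ind _).1 t ol nl e (acc_all_t t) (acc_all_e e) rfl
theorem acc_all_e : ∀ e : Env, Acc (fun a b => SRE b a) e
  | .nil => acc_nil
  | .econs t l e => acc_econs (acc_all_t t) (acc_all_e e)
  | .merge e1 n o e2 => (main_ind _).2 e1 n o e2 (acc_all_e e1) (acc_all_e e2) rfl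
end

end SNdev

/-- every rewriting sequence based on the reading and merging
rules terminates, i.e. the rewrite relation generated by (r1)-(r6) and
(m1)-(m6) applied at arbitrary subexpressions is strongly normalizing on
well-formed suspension expressions. -/
theorem rm_strongly_normalizing :
    (∀ t : Tm, WfTm t → Acc (fun a b => SR b a) t) ∧
    (∀ e : Env, WfEnv e → Acc (fun a b => SRE b a) e) :=
  ⟨fun t _ => acc_all_t t, fun e _ => acc_all_e e⟩
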